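/- arXiv:1906.10537 — 3 statements merged into one kernel-verified Lean document; each statement's English description precedes it below -/
import Mathlib

section
/- For every real number a > 5, every integer n ≥ 1, and every k with 1 ≤ k ≤ n+1, the n×n matrix E_n^k(a,1), obtained by deleting the k-th row of E_n(a,1), is invertible; that is, all order-n minors of E_n(a,1) are nonzero. -/
/-- The `(n+1) × n` matrix `E_n(a,1)`. -/
def Emat (n : ℕ) (a : ℝ) : Matrix (Fin (n + 1)) (Fin n) ℝ :=
  Matrix.of fun i j =>
    if (i : ℕ) = (j : ℕ) then -a
    else if (i : ℕ) + 1 = (j : ℕ) then 1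
    else if (i : ℕ) = (j : ℕ) + 1 then a
    else if (i : ℕ) = (j : ℕ) + 2 then -1
    else 0

/-- `E_n^k(a,1)`: the `n × n` matrix obtained from `E_n(a,1)` by deleting the
`k`-th row (rows of `E_n(a,1)` being counted `1,…,n+1`). -/
def Ek (n : ℕ) (a : ℝ) (k : ℕ) : Matrix (Fin n) (Fin n) ℝ :=
  Matrix.of fun i j =>
    Emat n a (if (i : ℕ) + 1 < k then i.castSucc else i.succ) j

/-- difference sequence of the zero-extension of `V`. -/
noncomputable def Yseq (V : ℕ → ℝ) : ℕ → ℝ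
  | 0 => 0
  | 1 => V 0
  | (t+2) => V (t+1) - V t

lemma auxGrow (b : ℝ) (hb : 4 ≤ b) (Z : ℕ → ℝ) (m : ℕ)
    (h0 : Z 0 = 0) (h1 : 0 ≤ Z 1)
    (hrec : ∀ r, r < m → Z (r+2) = b * Z (r+1) - Z r) :
    ∀ i, i ≤ m → (0 ≤ Z i ∧ Z i ≤ Z (i+1) ∧ Z 1 ≤ Z (i+1)) := by
  intro i
  induction i with
  | zero =>
    intro _
    exact ⟨le_of_eq h0.symm, by rw [h0]; exact h1, le_refl _⟩
  | succ i ih =>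
    intro hi
    obtain ⟨hz, hmono, hZ1⟩ := ih (Nat.le_of_succ_le hi)
    have h2 : Z (i+2) = b * Z (i+1) - Z i := hrec i (by omega)
    have hpos : 0 ≤ Z (i+1) := le_trans hz hmono
    have hstep : Z (i+1) ≤ Z (i+2) := by rw [h2]; nlinarith
    exact ⟨hpos, hstep, le_trans hZ1 hstep⟩

lemma auxZero (b : ℝ) (Z : ℕ → ℝ) (m : ℕ)
    (h0 : Z 0 = 0) (h1 : Z 1 = 0)
    (hrec : ∀ r, r < m → Z (r+2) = b * Z (r+1) - Z r) :
    ∀ i, i ≤ m + 1 → Z i = 0 := by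
  have key : ∀ i, i ≤ m → Z i = 0 ∧ Z (i+1) = 0 := by
    intro i
    induction i with
    | zero => exact fun _ => ⟨h0, h1⟩
    | succ i ih =>
      intro hi
      obtain ⟨a1, a2⟩ := ih (by omega)
      refine ⟨a2, ?_⟩
      rw [hrec i (by omega), a1, a2]; ring
  intro i hi
  rcases Nat.lt_or_ge i (m+1) with h | h
  · exact (key i (by omega)).1
  · have hieq : i = m + 1 := by omega
    rw [hieq]; exact (key m (le_refl _)).2

lemma rowSum (n : ℕ) (a : ℝ) (v : Fin n → ℝ) (R : Fin (n+1)) :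
    ∑ j, Emat n a R j * v j =
      Yseq (fun t => if h : t < n then v ⟨t, h⟩ else 0) ((R:ℕ)+2)
        - (a-1) * Yseq (fun t => if h : t < n then v ⟨t, h⟩ else 0) ((R:ℕ)+1)
        + Yseq (fun t => if h : t < n then v ⟨t, h⟩ else 0) (R:ℕ) := by
  set V : ℕ → ℝ := fun t => if h : t < n then v ⟨t, h⟩ else 0 with hV
  have hVz : ∀ t, n ≤ t → V t = 0 := fun t ht => dif_neg (by omega)
  obtain ⟨r, hr⟩ := R
  simp only [Fin.val_mk]
  have step1 : ∑ j : Fin n, Emat n a ⟨r, hr⟩ j * v j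
      = ∑ t ∈ Finset.range n,
        ((if t = r then -a * V t else 0) + (if t = r+1 then V t else 0)
          + (if t = r-1 then (if 1 ≤ r then a * V t else 0) else 0)
          + (if t = r-2 then (if 2 ≤ r then -V t else 0) else 0)) := by
    rw [← Fin.sum_univ_eq_sum_range]
    apply Finset.sum_congr rfl
    intro j _
    have hvj : v j = V (j : ℕ) := by simp [hV]
    simp only [Emat, Matrix.of_apply, hvj, Fin.val_mk]
    split_ifs <;> (first | ring1 | (exfalso; omega))
  rw [step1]
  rw [Finset.sum_add_distrib, Finset.sum_add_distrib, Finset.sum_add_distrib,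
    Finset.sum_ite_eq', Finset.sum_ite_eq', Finset.sum_ite_eq', Finset.sum_ite_eq']
  simp only [Finset.mem_range]
  have c1 : (if r < n then -a * V r else 0) = -a * V r := by
    split_ifs with h
    · rfl
    · rw [hVz r (by omega)]; ring
  have c2 : (if r + 1 < n then V (r+1) else 0) = V (r+1) := by
    split_ifs with h
    · rfl
    · rw [hVz (r+1) (by omega)]
  have c3 : (if r - 1 < n then (if 1 ≤ r then a * V (r-1) else 0) else 0)
      = (if 1 ≤ r then a * V (r-1) else 0) := by
    split_ifs with h h2
    · rfl
    · rfl
    · rw [hVz (r-1) (by omega)]; ring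
    · rfl
  have c4 : (if r - 2 < n then (if 2 ≤ r then -V (r-2) else 0) else 0)
      = (if 2 ≤ r then -V (r-2) else 0) := by
    split_ifs with h h2
    · rfl
    · rfl
    · rw [hVz (r-2) (by omega)]; ring
    · rfl
  rw [c1, c2, c3, c4]
  rcases r with _ | _ | s
  · simp only [Yseq]
    norm_num
    try ring
  · simp only [Yseq]
    norm_num
    try ring
  · have e1 : s + 1 + 1 - 1 = s + 1 := by omega
    have e2 : s + 1 + 1 - 2 = s := by omega
    rw [e1, e2, if_pos (by omega), if_pos (by omega)]
    show _ = Yseq V (s+2+2) - (a-1) * Yseq V (s+1+2) + Yseq V (s+2)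
    simp only [Yseq]
    ring_nf

theorem stmt8 (a : ℝ) (ha : 5 < a) (n : ℕ) (hn : 1 ≤ n)
    (k : ℕ) (hk1 : 1 ≤ k) (hk2 : k ≤ n + 1) :
    IsUnit (Ek n a k) ∧ (Ek n a k).det ≠ 0 := by
  have hdet : (Ek n a k).det ≠ 0 := by
    intro hdet
    obtain ⟨v, hv, hmv⟩ := (Matrix.exists_mulVec_eq_zero_iff).mpr hdet
    set V : ℕ → ℝ := fun t => if h : t < n then v ⟨t, h⟩ else 0 with hV
    set Y : ℕ → ℝ := Yseq V with hYdef
    set b : ℝ := a - 1 with hbdef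
    have hb4 : 4 ≤ b := by rw [hbdef]; linarith
    set m : ℕ := k - 1 with hmdef
    have hmn : m ≤ n := by omega
    have hVz : ∀ t, n ≤ t → V t = 0 := fun t ht => dif_neg (by omega)
    have hY0 : Y 0 = 0 := rfl
    have hY1 : Y 1 = V 0 := rfl
    have hY2 : ∀ t, Y (t+2) = V (t+1) - V t := fun t => rfl
    have hYtop : Y (n+2) = 0 := by
      rw [hY2, hVz _ (by omega), hVz _ (by omega)]; ring
    -- the row equations
    have hYrec : ∀ r, r ≤ n → r ≠ m → Y (r+2) = b * Y (r+1) - Y r := by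
      intro r hrn hrm
      have hex : ∃ i : Fin n,
          ((if (i:ℕ) + 1 < k then (Fin.castSucc i) else Fin.succ i) : Fin (n+1))
            = (⟨r, by omega⟩ : Fin (n+1)) := by
        rcases Nat.lt_or_ge r m with h | h
        · refine ⟨⟨r, by omega⟩, ?_⟩
          rw [if_pos (by simp; omega)]
          apply Fin.ext; simp
        · have h' : m < r := by omega
          refine ⟨⟨r - 1, by omega⟩, ?_⟩
          rw [if_neg (by simp; omega)]
          apply Fin.ext; simp; omega
      obtain ⟨i, hi⟩ := hex
      have h0 : (Ek n a k).mulVec v i = 0 := congrFun hmv i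
      have hsumEq : ∑ j, Emat n a (⟨r, by omega⟩ : Fin (n+1)) j * v j = 0 := by
        rw [← hi]
        simpa [Ek, Matrix.mulVec, dotProduct, Matrix.of_apply] using h0
      rw [rowSum] at hsumEq
      simp only [Fin.val_mk, ← hV, ← hYdef] at hsumEq
      rw [hbdef]
      linarith [hsumEq]
    -- the sum of Y over 1..n+1 is zero
    have hsum : ∑ t ∈ Finset.range (n+1), Y (t+1) = 0 := by
      rw [Finset.sum_range_succ' (fun t => Y (t+1)) n]
      have htel : ∑ t ∈ Finset.range n, Y (t+1+1) = V n - V 0 := by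
        have : ∀ t, Y (t+1+1) = V (t+1) - V t := fun t => hY2 t
        rw [Finset.sum_congr rfl (fun t _ => this t)]
        exact Finset.sum_range_sub V n
      rw [htel, hY1, hVz n (le_refl n)]
      ring
    -- growth lemmas
    have hreclow : ∀ (c : ℝ), ∀ r, r < m → c * Y (r+2) = b * (c * Y (r+1)) - c * Y r := by
      intro c r hr
      rw [hYrec r (by omega) (by omega)]; ring
    have glow : ∀ i, i ≤ m → Y 1 * Y 1 ≤ Y 1 * Y (i+1) := by
      intro i hi
      have h := auxGrow b hb4 (fun t => Y 1 * Y t) m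
        (show Y 1 * Y 0 = 0 by rw [hY0]; ring)
        (mul_self_nonneg (Y 1))
        (fun r hr => hreclow (Y 1) r hr)
      exact (h i hi).2.2
    have hrecup : ∀ (c : ℝ), ∀ s, s < n - m →
        c * Y (n+2-(s+2)) = b * (c * Y (n+2-(s+1))) - c * Y (n+2-s) := by
      intro c s hs
      have e1 : n+2-(s+2) = n - s := by omega
      have e2 : n+2-(s+1) = (n-s)+1 := by omega
      have e3 : n+2-s = (n-s)+2 := by omega
      rw [e1, e2, e3, hYrec (n-s) (by omega) (by omega)]
      ring
    have gup : ∀ t, m + 1 ≤ t → t ≤ n + 1 → Y (n+1) * Y (n+1) ≤ Y (n+1) * Y t := by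
      intro t ht1 ht2
      have h := auxGrow b hb4 (fun s => Y (n+1) * Y (n+2-s)) (n - m)
        (show Y (n+1) * Y (n+2-0) = 0 by
          rw [show n+2-0 = n+2 by omega, hYtop]; ring)
        (show (0:ℝ) ≤ Y (n+1) * Y (n+2-1) by
          rw [show n+2-1 = n+1 by omega]; exact mul_self_nonneg _)
        (fun s hs => hrecup (Y (n+1)) s hs)
      have h2 := (h (n+1-t) (by omega)).2.2
      rw [show n+2-1 = n+1 by omega, show n+2-(n+1-t+1) = t by omega] at h2
      exact h2
    by_cases hy1 : Y 1 = 0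
    · have hlow0 : ∀ i, i ≤ m + 1 → Y i = 0 :=
        auxZero b Y m hY0 hy1 (fun r hr => hYrec r (by omega) (by omega))
      have hm1 : Y (m+1) = 0 := hlow0 (m+1) le_rfl
      have hyn : Y (n+1) = 0 := by
        have := gup (m+1) le_rfl (by omega)
        rw [hm1] at this
        nlinarith
      have hup0 : ∀ i, i ≤ (n - m) + 1 → Y (n+2-i) = 0 := by
        apply auxZero b (fun s => Y (n+2-s)) (n-m)
        · show Y (n+2-0) = 0
          rw [show n+2-0 = n+2 by omega]; exact hYtop
        · show Y (n+2-1) = 0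
          rw [show n+2-1 = n+1 by omega]; exact hyn
        · intro s hs
          have := hrecup 1 s hs
          simpa using this
      have hall : ∀ t, t ≤ n + 1 → Y t = 0 := by
        intro t ht
        rcases le_or_gt t (m+1) with h | h
        · exact hlow0 t h
        · have := hup0 (n+2-t) (by omega)
          rwa [show n+2-(n+2-t) = t by omega] at this
      have hVzero : ∀ t, t ≤ n → V t = 0 := by
        intro t
        induction t with
        | zero => intro _; rw [← hY1]; exact hall 1 (by omega)
        | succ t ih =>
          intro ht
          have h2 := hY2 t
          rw [hall (t+2) (by omega)] at h2
          have := ih (by omega)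
          linarith
      apply hv
      funext j
      have hj := hVzero (j : ℕ) (by omega)
      rw [hV] at hj
      simpa [j.isLt] using hj
    · have hApos : 0 < Y 1 * Y (m+1) :=
        lt_of_lt_of_le (mul_self_pos.mpr hy1) (glow m le_rfl)
      have hyn : Y (n+1) ≠ 0 := by
        intro h
        have hup0 : ∀ i, i ≤ (n - m) + 1 → Y (n+2-i) = 0 := by
          apply auxZero b (fun s => Y (n+2-s)) (n-m)
          · show Y (n+2-0) = 0
            rw [show n+2-0 = n+2 by omega]; exact hYtop
          · show Y (n+2-1) = 0
            rw [show n+2-1 = n+1 by omega]; exact h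
          · intro s hs
            have := hrecup 1 s hs
            simpa using this
        have hz := hup0 (n+1-m) (by omega)
        rw [show n+2-(n+1-m) = m+1 by omega] at hz
        rw [hz] at hApos
        simp at hApos
      have hBpos : 0 < Y (n+1) * Y (m+1) :=
        lt_of_lt_of_le (mul_self_pos.mpr hyn) (gup (m+1) le_rfl (by omega))
      have hterm : ∀ t, 1 ≤ t → t ≤ n + 1 → 0 < (Y 1 * (Y (m+1) * Y (n+1))) * Y t := by
        intro t ht1 ht2
        rcases le_or_gt t (m+1) with h | h
        · have h1 : Y 1 * Y 1 ≤ Y 1 * Y t := by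
            have := glow (t-1) (by omega)
            rwa [show t-1+1 = t by omega] at this
          have h2 : 0 < Y 1 * Y t := lt_of_lt_of_le (mul_self_pos.mpr hy1) h1
          nlinarith [mul_pos h2 hBpos]
        · have h1 : 0 < Y (n+1) * Y t :=
            lt_of_lt_of_le (mul_self_pos.mpr hyn) (gup t (by omega) ht2)
          nlinarith [mul_pos h1 hApos]
      have hpos : 0 < ∑ t ∈ Finset.range (n+1), (Y 1 * (Y (m+1) * Y (n+1))) * Y (t+1) := by
        apply Finset.sum_pos
        · intro t htmem
          rw [Finset.mem_range] at htmem
          exact hterm (t+1) (by omega) (by omega)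
        · exact Finset.nonempty_range_iff.mpr (by omega)
      rw [← Finset.mul_sum, hsum, mul_zero] at hpos
      exact lt_irrefl 0 hpos
  exact ⟨(Matrix.isUnit_iff_isUnit_det _).mpr (Ne.isUnit hdet), hdet⟩
end

section
/- Let m, n be natural numbers with m ≥ 4 and n ≥ 4, and let a be a real number with |a| ≥ 2. Let 𝒮 ⊆ M_{m×n}(ℂ) be the complex linear span of the matrices S_{i,j}, for 1 ≤ i ≤ m−2 and 1 ≤ j ≤ n−2, where S_{i,j} is the m×n matrix whose only nonzero entries are: entry (i−1, j+1) equal to 1, entry (i, j) equal to a, and entry (i+1, j−1) equal to 1 (rows indexed 0,…,m−1, columns indexed 0,…,n−1). Then every nonzero matrix in 𝒮 has rank at least 3, and the dimension of 𝒮 over ℂ equals (m−2)(n−2). -/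
/-- The generator matrix `S_{i,j}` (rows indexed `0,…,m-1`, columns `0,…,n-1`):
its only nonzero entries are `(i-1, j+1) ↦ 1`, `(i, j) ↦ a`, `(i+1, j-1) ↦ 1`. -/
def Sgen (m n : ℕ) (a : ℝ) (i j : ℕ) : Matrix (Fin m) (Fin n) ℂ :=
  Matrix.of fun r c =>
    if (r : ℕ) = i - 1 ∧ (c : ℕ) = j + 1 then 1
    else if (r : ℕ) = i ∧ (c : ℕ) = j then (a : ℂ)
    else if (r : ℕ) = i + 1 ∧ (c : ℕ) = j - 1 then 1
    else 0

noncomputable section Stmt17Aux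

open Matrix Finset

/-- The linear map sending coefficients to the corresponding matrix. -/
def phiL (m n : ℕ) (a : ℝ) : (ℕ → ℕ → ℂ) →ₗ[ℂ] Matrix (Fin m) (Fin n) ℂ where
  toFun C := Matrix.of fun u w =>
    C ((u : ℕ)+1) ((w : ℕ)-1) + (a:ℂ) * C (u : ℕ) (w : ℕ) + C ((u : ℕ)-1) ((w : ℕ)+1)
  map_add' C D := by
    ext u w
    simp only [Matrix.of_apply, Pi.add_apply, Matrix.add_apply]
    ring
  map_smul' r C := by
    ext u w
    simp only [Matrix.of_apply, Pi.smul_apply, Matrix.smul_apply, smul_eq_mul,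
      RingHom.id_apply]
    ring

lemma phiL_apply (m n : ℕ) (a : ℝ) (C : ℕ → ℕ → ℂ) (u : Fin m) (w : Fin n) :
    phiL m n a C u w
      = C ((u : ℕ)+1) ((w : ℕ)-1) + (a:ℂ) * C (u : ℕ) (w : ℕ) + C ((u : ℕ)-1) ((w : ℕ)+1) :=
  rfl

lemma phi_single (m n : ℕ) (a : ℝ) (i j : ℕ)
    (hi1 : 1 ≤ i) (hi2 : i ≤ m-2) (hj1 : 1 ≤ j) (hj2 : j ≤ n-2) (hm : 4 ≤ m) (hn : 4 ≤ n) :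
    phiL m n a (fun x y => if x = i ∧ y = j then 1 else 0) = Sgen m n a i j := by
  ext u w
  rw [phiL_apply]
  show _ = Sgen m n a i j u w
  simp only [Sgen, Matrix.of_apply]
  split_ifs <;> first | (exfalso; omega) | ring

/-- The family indexed by a fintype. -/
def vfam (m n : ℕ) (a : ℝ) (p : Fin (m-2) × Fin (n-2)) : Matrix (Fin m) (Fin n) ℂ :=
  Sgen m n a ((p.1 : ℕ)+1) ((p.2 : ℕ)+1)

lemma set_eq (m n : ℕ) (a : ℝ) (hm : 4 ≤ m) (hn : 4 ≤ n) :
    {M : Matrix (Fin m) (Fin n) ℂ |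
      ∃ i j : ℕ, 1 ≤ i ∧ i ≤ m - 2 ∧ 1 ≤ j ∧ j ≤ n - 2 ∧ M = Sgen m n a i j}
    = Set.range (vfam m n a) := by
  ext M
  constructor
  · rintro ⟨i, j, hi1, hi2, hj1, hj2, rfl⟩
    refine ⟨(⟨i-1, by omega⟩, ⟨j-1, by omega⟩), ?_⟩
    show Sgen m n a ((i-1)+1) ((j-1)+1) = Sgen m n a i j
    rw [show i-1+1 = i by omega, show j-1+1 = j by omega]
  · rintro ⟨p, rfl⟩
    exact ⟨(p.1 : ℕ)+1, (p.2 : ℕ)+1, by omega, by have := p.1.isLt; omega,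
      by omega, by have := p.2.isLt; omega, rfl⟩

/-- Package a finite coefficient family into a `ℕ`-indexed one supported in the box. -/
def Cof (m n : ℕ) (c : Fin (m-2) × Fin (n-2) → ℂ) : ℕ → ℕ → ℂ := fun i j =>
  if h : 1 ≤ i ∧ i ≤ m-2 ∧ 1 ≤ j ∧ j ≤ n-2 then
    c (⟨i-1, by omega⟩, ⟨j-1, by omega⟩) else 0

lemma Cof_supp (m n : ℕ) (c : Fin (m-2) × Fin (n-2) → ℂ) (i j : ℕ)
    (h : Cof m n c i j ≠ 0) : 1 ≤ i ∧ i ≤ m-2 ∧ 1 ≤ j ∧ j ≤ n-2 := by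
  by_contra hc
  exact h (by simp only [Cof, dif_neg hc])

lemma Cof_apply_mem (m n : ℕ) (c : Fin (m-2) × Fin (n-2) → ℂ) (p : Fin (m-2) × Fin (n-2)) :
    Cof m n c ((p.1 : ℕ)+1) ((p.2 : ℕ)+1) = c p := by
  have h : 1 ≤ (p.1:ℕ)+1 ∧ (p.1:ℕ)+1 ≤ m-2 ∧ 1 ≤ (p.2:ℕ)+1 ∧ (p.2:ℕ)+1 ≤ n-2 :=
    ⟨by omega, by have := p.1.isLt; omega, by omega, by have := p.2.isLt; omega⟩
  obtain ⟨p1, p2⟩ := p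
  simp only [Cof, dif_pos h]
  congr 1

lemma Cof_eq_sum (m n : ℕ) (c : Fin (m-2) × Fin (n-2) → ℂ) :
    Cof m n c = ∑ p : Fin (m-2) × Fin (n-2),
      c p • (fun x y => if x = (p.1 : ℕ)+1 ∧ y = (p.2 : ℕ)+1 then (1:ℂ) else 0) := by
  funext i j
  classical
  have hs : (∑ p : Fin (m-2) × Fin (n-2),
      c p • (fun x y => if x = (p.1 : ℕ)+1 ∧ y = (p.2 : ℕ)+1 then (1:ℂ) else 0)) i j
      = ∑ p : Fin (m-2) × Fin (n-2),
        (if i = (p.1 : ℕ)+1 ∧ j = (p.2 : ℕ)+1 then c p else 0) := by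
    rw [Finset.sum_apply, Finset.sum_apply]
    refine Finset.sum_congr rfl fun p _ => ?_
    simp only [Pi.smul_apply, smul_eq_mul]
    split_ifs <;> simp
  rw [hs]
  by_cases h : 1 ≤ i ∧ i ≤ m-2 ∧ 1 ≤ j ∧ j ≤ n-2
  · obtain ⟨h1, h2, h3, h4⟩ := h
    have hm2 : i - 1 < m - 2 := by omega
    have hn2 : j - 1 < n - 2 := by omega
    rw [Finset.sum_eq_single ((⟨i-1, hm2⟩, ⟨j-1, hn2⟩) : Fin (m-2) × Fin (n-2))]
    · have hcond : i = ((⟨i-1, hm2⟩ : Fin (m-2)) : ℕ) + 1 ∧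
          j = ((⟨j-1, hn2⟩ : Fin (n-2)) : ℕ) + 1 := by
        refine ⟨?_, ?_⟩ <;> simp <;> omega
      rw [if_pos hcond, Cof, dif_pos ⟨h1, h2, h3, h4⟩]
    · rintro ⟨p1, p2⟩ _ hp
      rw [if_neg]
      rintro ⟨e1, e2⟩
      have e1' : i = (p1 : ℕ) + 1 := e1
      have e2' : j = (p2 : ℕ) + 1 := e2
      refine hp ?_
      rw [Prod.mk.injEq]
      constructor <;> apply Fin.ext <;> simp <;> omega
    · intro hmem; exact absurd (Finset.mem_univ _) hmem
  · rw [Finset.sum_eq_zero, Cof, dif_neg h]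
    intro p _
    rw [if_neg]
    rintro ⟨rfl, rfl⟩
    exact h ⟨by omega, by have := p.1.isLt; omega, by omega, by have := p.2.isLt; omega⟩

lemma phiL_Cof (m n : ℕ) (a : ℝ) (hm : 4 ≤ m) (hn : 4 ≤ n)
    (c : Fin (m-2) × Fin (n-2) → ℂ) :
    phiL m n a (Cof m n c) = ∑ p : Fin (m-2) × Fin (n-2), c p • vfam m n a p := by
  rw [Cof_eq_sum, map_sum]
  refine Finset.sum_congr rfl fun p _ => ?_
  rw [LinearMap.map_smul, phi_single m n a _ _ (by omega) (by have := p.1.isLt; omega)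
    (by omega) (by have := p.2.isLt; omega) hm hn]
  rfl

/-- The entry formula of `phiL` as a plain function of natural number indices. -/
def Fent (a : ℝ) (C : ℕ → ℕ → ℂ) (u w : ℕ) : ℂ :=
  C (u+1) (w-1) + (a:ℂ) * C u w + C (u-1) (w+1)

lemma phiL_eq_Fent (m n : ℕ) (a : ℝ) (C : ℕ → ℕ → ℂ) (u : Fin m) (w : Fin n) :
    phiL m n a C u w = Fent a C (u : ℕ) (w : ℕ) :=
  rfl

set_option maxHeartbeats 1000000 in
lemma key (m n : ℕ) (a : ℝ) (hm : 4 ≤ m) (hn : 4 ≤ n) (ha : 2 ≤ |a|)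
    (C : ℕ → ℕ → ℂ)
    (hsupp : ∀ i j, C i j ≠ 0 → 1 ≤ i ∧ i ≤ m-2 ∧ 1 ≤ j ∧ j ≤ n-2)
    (i₀ j₀ : ℕ) (hC : C i₀ j₀ ≠ 0) :
    ∃ d r₁ r₂ r₃ : ℕ,
      r₁ < r₂ ∧ r₂ < r₃ ∧ r₃ ≤ d ∧ r₃ ≤ m - 1 ∧ d ≤ r₁ + (n - 1) ∧
      Fent a C r₁ (d - r₁) ≠ 0 ∧ Fent a C r₂ (d - r₂) ≠ 0 ∧ Fent a C r₃ (d - r₃) ≠ 0 ∧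
      (∀ u w : ℕ, u + w < d → Fent a C u w = 0) := by
  classical
  have haC : (a:ℂ) ≠ 0 := by
    intro h
    rw [Complex.ofReal_eq_zero] at h
    rw [h] at ha
    simp at ha
    linarith
  set T : Finset (ℕ × ℕ) := (Finset.Icc 1 (m-2) ×ˢ Finset.Icc 1 (n-2)).filter
    (fun p => C p.1 p.2 ≠ 0) with hT
  have hmemT : ∀ p : ℕ × ℕ, p ∈ T ↔ C p.1 p.2 ≠ 0 := by
    intro p
    constructor
    · intro h; exact (Finset.mem_filter.mp h).2
    · intro h
      refine Finset.mem_filter.mpr ⟨?_, h⟩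
      have := hsupp _ _ h
      rw [Finset.mem_product, Finset.mem_Icc, Finset.mem_Icc]
      omega
  have hTne : T.Nonempty := ⟨(i₀, j₀), (hmemT _).mpr hC⟩
  have hTim : (T.image fun p => p.1 + p.2).Nonempty := hTne.image _
  set d := (T.image fun p => p.1 + p.2).min' hTim with hd
  have hdmem : ∃ p ∈ T, p.1 + p.2 = d := by
    have := (T.image fun p => p.1 + p.2).min'_mem hTim
    simpa [Finset.mem_image] using this
  have hdmin : ∀ i j, C i j ≠ 0 → d ≤ i + j := by
    intro i j h
    exact Finset.min'_le _ _ (Finset.mem_image_of_mem _ ((hmemT (i,j)).mpr h))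
  obtain ⟨t, ht⟩ : ∃ t : ℕ → ℂ, ∀ k, t k = C k (d - k) := ⟨_, fun _ => rfl⟩
  have htsupp : ∀ k, t k ≠ 0 → 1 ≤ k ∧ k ≤ m-2 ∧ k < d ∧ d - k ≤ n-2 := by
    intro k hk
    rw [ht] at hk
    have h1 := hsupp _ _ hk
    have h2 := hdmin _ _ hk
    omega
  set S : Finset ℕ := (Finset.Icc 1 (m-2)).filter (fun k => t k ≠ 0) with hS
  have hmemS : ∀ k, k ∈ S ↔ t k ≠ 0 := by
    intro k
    rw [hS, Finset.mem_filter, Finset.mem_Icc]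
    exact ⟨fun h => h.2, fun h => ⟨by have := htsupp k h; omega, h⟩⟩
  have hSne : S.Nonempty := by
    obtain ⟨p, hpT, hpd⟩ := hdmem
    refine ⟨p.1, (hmemS _).mpr ?_⟩
    have h2 : C p.1 p.2 ≠ 0 := (hmemT _).mp hpT
    rw [ht, show d - p.1 = p.2 by omega]
    exact h2
  set s := S.min' hSne with hsdef
  set e := S.max' hSne with hedef
  have hts : t s ≠ 0 := (hmemS _).mp (S.min'_mem hSne)
  have hte : t e ≠ 0 := (hmemS _).mp (S.max'_mem hSne)
  have hrange : ∀ k, t k ≠ 0 → s ≤ k ∧ k ≤ e := fun k hk =>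
    ⟨S.min'_le _ ((hmemS _).mpr hk), S.le_max' _ ((hmemS _).mpr hk)⟩
  have hse : s ≤ e := (hrange s hts).2
  have hsbd := htsupp s hts
  have hebd := htsupp e hte
  have htlow : ∀ k, k < s → t k = 0 := by
    intro k hk; by_contra h; have := (hrange k h).1; omega
  have hthigh : ∀ k, e < k → t k = 0 := by
    intro k hk; by_contra h; have := (hrange k h).2; omega
  obtain ⟨x, hxdef⟩ : ∃ x : ℕ → ℂ, ∀ u, x u = t (u+1) + (a:ℂ) * t u + t (u-1) :=
    ⟨_, fun _ => rfl⟩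
  have hC0 : ∀ w, C 0 w = 0 := fun w => by
    by_contra h; have := hsupp _ _ h; omega
  have hFx : ∀ u, u ≤ d → Fent a C u (d - u) = x u := by
    intro u hu
    rw [hxdef, ht, ht, ht, Fent, show d - u - 1 = d - (u+1) by omega]
    congr 1
    rcases Nat.eq_zero_or_pos u with h0 | h0
    · subst h0
      simp only [Nat.zero_sub]
      rw [hC0, hC0]
    · congr 1
      omega
  have hx1 : x (s-1) ≠ 0 := by
    rw [hxdef, show s - 1 + 1 = s by omega, htlow (s-1) (by omega),
      htlow (s-1-1) (by omega)]
    simpa using hts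
  have hx3 : x (e+1) ≠ 0 := by
    rw [hxdef, hthigh (e+1+1) (by omega), hthigh (e+1) (by omega),
      show e + 1 - 1 = e by omega]
    simpa using hte
  have hx2 : ∃ r, s ≤ r ∧ r ≤ e ∧ x r ≠ 0 := by
    by_contra hcon
    push_neg at hcon
    have grow : ∀ k, s ≤ k → k ≤ e →
        t k ≠ 0 ∧ (s < k → (|a| - 1) * ‖t (k-1)‖ ≤ ‖t k‖) := by
      intro k
      induction k with
      | zero => intro h1 h2; exfalso; omega
      | succ k ih =>
        intro h1 h2
        rcases eq_or_lt_of_le h1 with heq | hlt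
        · exact ⟨heq ▸ hts, fun h => absurd heq (by omega)⟩
        · have hk1 : s ≤ k := by omega
          obtain ⟨htk, hineq⟩ := ih hk1 (by omega)
          have hxk := hcon k hk1 (by omega)
          rw [hxdef] at hxk
          have hrec : t (k+1) = -((a:ℂ) * t k) - t (k-1) := by
            linear_combination hxk
          have hApos : 0 < ‖t k‖ := norm_pos_iff.mpr htk
          rcases eq_or_lt_of_le hk1 with hek | hek
          · -- s = k : t (k-1) = 0
            have h0 : t (k-1) = 0 := htlow _ (by omega)
            rw [h0, sub_zero] at hrec
            have hAe : ‖t (k+1)‖ = |a| * ‖t k‖ := by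
              rw [hrec, norm_neg, norm_mul, Complex.norm_real, Real.norm_eq_abs]
            have hpos : 0 < ‖t (k+1)‖ := by
              rw [hAe]
              exact mul_pos (by linarith [abs_nonneg a]) hApos
            constructor
            · intro h
              rw [h, norm_zero] at hpos
              exact lt_irrefl _ hpos
            · intro _
              rw [hAe, Nat.add_sub_cancel]
              nlinarith [norm_nonneg (t k)]
          · -- s < k
            have h3 := hineq hek
            have htri : |a| * ‖t k‖
                ≤ ‖t (k+1)‖ + ‖t (k-1)‖ := by
              have hcomm : (a:ℂ) * t k = -(t (k+1) + t (k-1)) := by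
                linear_combination hxk
              calc |a| * ‖t k‖ = ‖(a:ℂ) * t k‖ := by
                    rw [norm_mul, Complex.norm_real, Real.norm_eq_abs]
                _ = ‖t (k+1) + t (k-1)‖ := by
                    rw [hcomm, norm_neg]
                _ ≤ _ := norm_add_le _ _
            have hA1 : 0 ≤ ‖t (k-1)‖ := norm_nonneg _
            have hgoal : (|a| - 1) * ‖t k‖ ≤ ‖t (k+1)‖ := by
              nlinarith [mul_nonneg (by linarith : (0:ℝ) ≤ |a| - 2)
                (norm_nonneg (t (k-1)))]
            constructor
            · intro h
              rw [h, norm_zero] at hgoal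
              nlinarith
            · intro _
              rw [Nat.add_sub_cancel]
              exact hgoal
    rcases eq_or_lt_of_le hse with heq | hlt
    · have h0 := hcon s le_rfl (le_of_eq heq)
      rw [hxdef, hthigh (s+1) (by omega), htlow (s-1) (by omega)] at h0
      have : (a:ℂ) * t s = 0 := by linear_combination h0
      rcases mul_eq_zero.mp this with h' | h'
      · exact haC h'
      · exact hts h'
    · have hxe := hcon e hse le_rfl
      rw [hxdef, hthigh (e+1) (by omega)] at hxe
      have h1 : (a:ℂ) * t e = -(t (e-1)) := by linear_combination hxe
      have h2 : |a| * ‖t e‖ = ‖t (e-1)‖ := by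
        rw [← Real.norm_eq_abs, ← Complex.norm_real, ← norm_mul, h1, norm_neg]
      obtain ⟨hte', hineq⟩ := grow e hse le_rfl
      have h3 := hineq hlt
      have hA : 0 < ‖t e‖ := norm_pos_iff.mpr hte'
      nlinarith [norm_nonneg (t (e-1))]
  obtain ⟨r₂, hr2s, hr2e, hx2'⟩ := hx2
  refine ⟨d, s - 1, r₂, e + 1, by omega, by omega, by omega, by omega, by omega,
    ?_, ?_, ?_, ?_⟩
  · rw [hFx _ (by omega)]; exact hx1
  · rw [hFx _ (by omega)]; exact hx2'
  · rw [hFx _ (by omega)]; exact hx3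
  · intro u w huw
    have h1 : C (u+1) (w-1) = 0 := by
      by_contra h; have := hsupp _ _ h; have := hdmin _ _ h; omega
    have h2 : C u w = 0 := by
      by_contra h; have := hdmin _ _ h; omega
    have h3 : C (u-1) (w+1) = 0 := by
      by_contra h; have := hsupp _ _ h; have := hdmin _ _ h; omega
    simp [Fent, h1, h2, h3]

lemma rank_ge3 (m n : ℕ) (M : Matrix (Fin m) (Fin n) ℂ)
    (f : Fin 3 → Fin m) (g : Fin 3 → Fin n)
    (hdiag : ∀ i, M (f i) (g i) ≠ 0)
    (hupper : ∀ i j : Fin 3, i < j → M (f i) (g j) = 0) :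
    3 ≤ M.rank := by
  classical
  set B : Matrix (Fin 3) (Fin 3) ℂ := M.submatrix f g with hB
  have hdet : B.det ≠ 0 := by
    rw [Matrix.det_fin_three]
    have h01 : B 0 1 = 0 := hupper 0 1 (by decide)
    have h02 : B 0 2 = 0 := hupper 0 2 (by decide)
    have h12 : B 1 2 = 0 := hupper 1 2 (by decide)
    rw [h01, h02, h12]
    ring_nf
    simpa [hB] using mul_ne_zero (mul_ne_zero (hdiag 0) (hdiag 1)) (hdiag 2)
  have hBunit : IsUnit B.det := isUnit_iff_ne_zero.mpr hdet
  -- the three columns of M selected by g are linearly independent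
  set cols : Fin 3 → (Fin m → ℂ) := fun j => fun u => M u (g j) with hcols
  have hli : LinearIndependent ℂ cols := by
    apply LinearIndependent.of_comp (LinearMap.funLeft ℂ ℂ f)
    rw [Fintype.linearIndependent_iff]
    intro c hc
    have hvec : B.mulVec c = 0 := by
      funext i
      have := congrFun hc i
      simp only [Finset.sum_apply, Pi.smul_apply, LinearMap.funLeft_apply,
        Function.comp_apply, Pi.zero_apply, smul_eq_mul] at this
      simp only [Matrix.mulVec, dotProduct, hB, Matrix.submatrix_apply,
        Pi.zero_apply]
      rw [← this]
      exact Finset.sum_congr rfl fun j _ => mul_comm _ _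
    intro i
    have : c = 0 := by
      have h1 : B⁻¹.mulVec (B.mulVec c) = c := by
        rw [Matrix.mulVec_mulVec, Matrix.nonsing_inv_mul B hBunit, Matrix.one_mulVec]
      rw [hvec, Matrix.mulVec_zero] at h1
      exact h1.symm
    rw [this]
    rfl
  have hmem : ∀ j, cols j ∈ LinearMap.range M.mulVecLin := by
    intro j
    refine ⟨Pi.single (g j) 1, ?_⟩
    funext u
    simp [Matrix.mulVecLin_apply, Matrix.mulVec_single, hcols]
  have hle : Submodule.span ℂ (Set.range cols) ≤ LinearMap.range M.mulVecLin := by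
    rw [Submodule.span_le]
    rintro _ ⟨j, rfl⟩
    exact hmem j
  have h3 : Module.finrank ℂ (Submodule.span ℂ (Set.range cols)) = 3 := by
    rw [finrank_span_eq_card hli]
    simp
  calc (3:ℕ) = Module.finrank ℂ (Submodule.span ℂ (Set.range cols)) := h3.symm
    _ ≤ Module.finrank ℂ (LinearMap.range M.mulVecLin) := Submodule.finrank_mono hle
    _ = M.rank := rfl

end Stmt17Aux

set_option maxHeartbeats 1000000 in
theorem stmt17 (m n : ℕ) (hm : 4 ≤ m) (hn : 4 ≤ n) (a : ℝ) (ha : 2 ≤ |a|) :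
    (∀ M ∈ Submodule.span ℂ {M : Matrix (Fin m) (Fin n) ℂ |
        ∃ i j : ℕ, 1 ≤ i ∧ i ≤ m - 2 ∧ 1 ≤ j ∧ j ≤ n - 2 ∧ M = Sgen m n a i j},
      M ≠ 0 → 3 ≤ M.rank) ∧
    Module.finrank ℂ (Submodule.span ℂ {M : Matrix (Fin m) (Fin n) ℂ |
        ∃ i j : ℕ, 1 ≤ i ∧ i ≤ m - 2 ∧ 1 ≤ j ∧ j ≤ n - 2 ∧ M = Sgen m n a i j}) =
      (m - 2) * (n - 2) := by
  classical
  rw [set_eq m n a hm hn]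
  constructor
  · intro M hM hM0
    rw [Submodule.mem_span_range_iff_exists_fun] at hM
    obtain ⟨c, hc⟩ := hM
    have hphi : phiL m n a (Cof m n c) = M := by
      rw [phiL_Cof m n a hm hn c]; exact hc
    -- find a nonzero coefficient
    have hex : ∃ p, c p ≠ 0 := by
      by_contra hall
      push_neg at hall
      apply hM0
      rw [← hc]
      exact Finset.sum_eq_zero fun p _ => by rw [hall p, zero_smul]
    obtain ⟨p, hp⟩ := hex
    have hCp : Cof m n c ((p.1 : ℕ)+1) ((p.2 : ℕ)+1) ≠ 0 := by
      rw [Cof_apply_mem]; exact hp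
    have hsupp := Cof_supp m n c
    obtain ⟨d, r₁, r₂, r₃, h12, h23, h3d, h3m, hdn, hF1, hF2, hF3, hzero⟩ :=
      key m n a hm hn ha (Cof m n c) hsupp _ _ hCp
    have hr1m : r₁ < m := by omega
    have hr2m : r₂ < m := by omega
    have hr3m : r₃ < m := by omega
    have hd1n : d - r₁ < n := by omega
    have hd2n : d - r₂ < n := by omega
    have hd3n : d - r₃ < n := by omega
    refine rank_ge3 m n M
      ![⟨r₁, hr1m⟩, ⟨r₂, hr2m⟩, ⟨r₃, hr3m⟩]
      ![⟨d - r₁, hd1n⟩, ⟨d - r₂, hd2n⟩, ⟨d - r₃, hd3n⟩] ?_ ?_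
    · intro i
      rw [← hphi]
      fin_cases i
      · exact hF1
      · exact hF2
      · exact hF3
    · intro i j hij
      rw [← hphi]
      fin_cases i <;> fin_cases j
      · exact absurd hij (by decide)
      · exact hzero r₁ (d - r₂) (by omega)
      · exact hzero r₁ (d - r₃) (by omega)
      · exact absurd hij (by decide)
      · exact absurd hij (by decide)
      · exact hzero r₂ (d - r₃) (by omega)
      · exact absurd hij (by decide)
      · exact absurd hij (by decide)
      · exact absurd hij (by decide)
  · have hli : LinearIndependent ℂ (vfam m n a) := by
      rw [Fintype.linearIndependent_iff]
      intro c hc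
      by_contra hall
      push_neg at hall
      obtain ⟨p, hp⟩ := hall
      have hphi : phiL m n a (Cof m n c) = 0 := by
        rw [phiL_Cof m n a hm hn c, hc]
      have hCp : Cof m n c ((p.1 : ℕ)+1) ((p.2 : ℕ)+1) ≠ 0 := by
        rw [Cof_apply_mem]; exact hp
      obtain ⟨d, r₁, r₂, r₃, h12, h23, h3d, h3m, hdn, hF1, hF2, hF3, hzero⟩ :=
        key m n a hm hn ha (Cof m n c) (Cof_supp m n c) _ _ hCp
      apply hF1
      have hr1m : r₁ < m := by omega
      have hd1n : d - r₁ < n := by omega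
      have := congrFun (congrFun (congrArg (fun M => (M : Matrix (Fin m) (Fin n) ℂ))
        hphi) ⟨r₁, hr1m⟩) ⟨d - r₁, hd1n⟩
      simpa [phiL_eq_Fent] using this
    rw [finrank_span_eq_card hli]
    simp [Fintype.card_prod]
end

section
/- Let m, n be natural numbers with m ≥ 4 and n ≥ 4, and let a be a real number with a > 4. Let 𝒯 ⊆ M_{m×n}(ℂ) be the complex linear span of the matrices T_{i,j}, for 2 ≤ i ≤ m−2 and 2 ≤ j ≤ n−2, where T_{i,j} has only nonzero entries: (i−2, j+1) ↦ 1, (i−1, j) ↦ a+1, (i, j−1) ↦ a+1, (i+1, j−2) ↦ 1, and let 𝒮 ⊆ M_{m×n}(ℂ) be the complex linear span of the matrices S_{i,j}, for 1 ≤ i ≤ m−2 and 1 ≤ j ≤ n−2, where S_{i,j} has only nonzero entries: (i−1, j+1) ↦ 1, (i, j) ↦ a, (i+1, j−1) ↦ 1. Then there exists a matrix M ∈ 𝒮 with M ∉ 𝒯 such that M has rank exactly 3. -/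
/-- The generator matrix `T_{i,j}` (rows indexed `0,…,m-1`, columns `0,…,n-1`):
its only nonzero entries are `(i-2, j+1) ↦ 1`, `(i-1, j) ↦ a+1`, `(i, j-1) ↦ a+1`,
`(i+1, j-2) ↦ 1`. -/
def Tgen (m n : ℕ) (a : ℝ) (i j : ℕ) : Matrix (Fin m) (Fin n) ℂ :=
  Matrix.of fun r c =>
    if (r : ℕ) = i - 2 ∧ (c : ℕ) = j + 1 then 1
    else if (r : ℕ) = i - 1 ∧ (c : ℕ) = j then (a : ℂ) + 1
    else if (r : ℕ) = i ∧ (c : ℕ) = j - 1 then (a : ℂ) + 1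
    else if (r : ℕ) = i + 1 ∧ (c : ℕ) = j - 2 then 1
    else 0

theorem stmt19 (m n : ℕ) (hm : 4 ≤ m) (hn : 4 ≤ n) (a : ℝ) (ha : 4 < a) :
    ∃ M ∈ Submodule.span ℂ {M : Matrix (Fin m) (Fin n) ℂ |
        ∃ i j : ℕ, 1 ≤ i ∧ i ≤ m - 2 ∧ 1 ≤ j ∧ j ≤ n - 2 ∧ M = Sgen m n a i j},
      M ∉ Submodule.span ℂ {M : Matrix (Fin m) (Fin n) ℂ |
        ∃ i j : ℕ, 2 ≤ i ∧ i ≤ m - 2 ∧ 2 ≤ j ∧ j ≤ n - 2 ∧ M = Tgen m n a i j} ∧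
      M.rank = 3 := by
  have haC : (a : ℂ) ≠ 0 := by
    simp only [ne_eq, Complex.ofReal_eq_zero]
    linarith
  refine ⟨Sgen m n a 1 1, ?_, ?_, ?_⟩
  · exact Submodule.subset_span ⟨1, 1, le_refl _, by omega, le_refl _, by omega, rfl⟩
  · -- Sgen m n a 1 1 is not in the span of the Tgen's:
    -- the "(1,1) entry" linear functional separates them.
    intro hmem
    have hker : Submodule.span ℂ {M : Matrix (Fin m) (Fin n) ℂ |
        ∃ i j : ℕ, 2 ≤ i ∧ i ≤ m - 2 ∧ 2 ≤ j ∧ j ≤ n - 2 ∧ M = Tgen m n a i j} ≤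
        LinearMap.ker
          ({ toFun := fun X => X ⟨1, by omega⟩ ⟨1, by omega⟩
             map_add' := fun X Y => rfl
             map_smul' := fun c X => rfl } :
            Matrix (Fin m) (Fin n) ℂ →ₗ[ℂ] ℂ) := by
      rw [Submodule.span_le]
      rintro X ⟨i, j, hi2, hi, hj2, hj, rfl⟩
      simp only [SetLike.mem_coe, LinearMap.mem_ker, LinearMap.coe_mk, AddHom.coe_mk]
      show Tgen m n a i j ⟨1, by omega⟩ ⟨1, by omega⟩ = 0
      simp only [Tgen, Matrix.of_apply]
      norm_num
      split_ifs <;> first | rfl | omega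
    have h0 := hker hmem
    simp only [LinearMap.mem_ker, LinearMap.coe_mk, AddHom.coe_mk] at h0
    have hval : Sgen m n a 1 1 ⟨1, by omega⟩ ⟨1, by omega⟩ = (a : ℂ) := by
      simp only [Sgen, Matrix.of_apply]
      norm_num
    change Sgen m n a 1 1 ⟨1, by omega⟩ ⟨1, by omega⟩ = 0 at h0
    rw [hval] at h0
    exact haC h0
  · -- rank (Sgen m n a 1 1) = 3
    have hlow : (3 : ℕ) ≤ (Sgen m n a 1 1).rank := by
      set f : Fin 3 → Fin m := fun k => ⟨(k : ℕ), by omega⟩ with hf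
      set g : Fin 3 → Fin n := fun k => ⟨(k : ℕ), by omega⟩ with hg
      have hDdet : ((Sgen m n a 1 1).submatrix f g).det = -(a : ℂ) := by
        rw [Matrix.det_fin_three]
        simp only [hf, hg, Matrix.submatrix_apply, Sgen, Matrix.of_apply,
          Fin.val_zero, Fin.val_one, Fin.val_two, Fin.isValue]
        norm_num
      have hDunit : IsUnit ((Sgen m n a 1 1).submatrix f g) := by
        rw [Matrix.isUnit_iff_isUnit_det, hDdet, isUnit_iff_ne_zero]
        simpa using haC
      have hDrank : ((Sgen m n a 1 1).submatrix f g).rank = 3 := by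
        rw [Matrix.rank_of_isUnit _ hDunit]
        simp
      have hfact : (Sgen m n a 1 1).submatrix f g =
          ((1 : Matrix (Fin m) (Fin m) ℂ).submatrix f (Equiv.refl (Fin m))) *
            ((Sgen m n a 1 1) *
              ((1 : Matrix (Fin n) (Fin n) ℂ).submatrix (Equiv.refl (Fin n)) g)) := by
        rw [Matrix.mul_submatrix_one, Matrix.one_submatrix_mul]
        simp
      calc (3 : ℕ) = ((Sgen m n a 1 1).submatrix f g).rank := hDrank.symm
        _ ≤ ((Sgen m n a 1 1) *
              ((1 : Matrix (Fin n) (Fin n) ℂ).submatrix (Equiv.refl (Fin n)) g)).rank := by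
            rw [hfact]; exact Matrix.rank_mul_le_right _ _
        _ ≤ (Sgen m n a 1 1).rank := Matrix.rank_mul_le_left _ _
    have hup : (Sgen m n a 1 1).rank ≤ 3 := by
      set g : Fin 3 → Fin n := fun k => ⟨(k : ℕ), by omega⟩ with hg
      set B : Matrix (Fin 3) (Fin n) ℂ :=
        Matrix.of (fun k c => if (c : ℕ) = (k : ℕ) then (1 : ℂ) else 0) with hB
      have hMAB : Sgen m n a 1 1 = ((Sgen m n a 1 1).submatrix id g) * B := by
        ext r c
        simp only [Matrix.mul_apply, Fin.sum_univ_three, hB, hg, Matrix.submatrix_apply,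
          Matrix.of_apply, Sgen, id_eq, Fin.val_zero, Fin.val_one, Fin.val_two, Fin.isValue]
        norm_num
        split_ifs <;> first | omega | simp
      calc (Sgen m n a 1 1).rank = (((Sgen m n a 1 1).submatrix id g) * B).rank := by
            rw [← hMAB]
        _ ≤ B.rank := Matrix.rank_mul_le_right _ _
        _ ≤ 3 := by simpa using B.rank_le_card_height
    omega
end
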